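/- Let G be a connected non-bipartite graph, k ≥ 2, c a proper k-vertex coloring of G, and s : E(G) → Z_k an edge coloring whose induced vertex labeling agrees with c on all vertices except possibly a vertex v. Let x ∈ Z_k be such that no neighbor u of v satisfies c(u) = c_s(v) + 2x in Z_k, where c_s(v) is the induced label of v. Then the vertex coloring obtained from c by recoloring v with c_s(v) + 2x is induced by some improper twin k-edge coloring of G. -/

import Mathlib

open Finset

-- The vertex label induced by an edge coloring: `twinLabel G s v = Σ_{e ∈ E_v} s e` in `ZMod k`.
open scoped Classical in
noncomputable def twinLabel {V : Type*} [Fintype V] (G : SimpleGraph V) {k : ℕ}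
    (s : Sym2 V → ZMod k) (v : V) : ZMod k :=
  ∑ e ∈ G.incidenceFinset v, s e

/-- `s` is an improper twin `k`-edge coloring of `G`: the induced vertex labeling
is a proper vertex coloring. -/
def IsImproperTwin {V : Type*} [Fintype V] (G : SimpleGraph V) (k : ℕ)
    (s : Sym2 V → ZMod k) : Prop :=
  ∀ ⦃u v : V⦄, G.Adj u v → twinLabel G s u ≠ twinLabel G s v

/-- The improper twin chromatic index: the least `k ≥ 2` admitting an improper twin
`k`-edge coloring. -/
noncomputable def improperTwinIndex {V : Type*} [Fintype V] (G : SimpleGraph V) : ℕ :=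
  sInf {k | 2 ≤ k ∧ ∃ s : Sym2 V → ZMod k, IsImproperTwin G k s}

section Aux
variable {V : Type*} [Fintype V] [DecidableEq V] (G : SimpleGraph V) {k : ℕ}

lemma twinLabel_add (s t : Sym2 V → ZMod k) (v : V) :
    twinLabel G (s + t) v = twinLabel G s v + twinLabel G t v := by
  classical
  simp [twinLabel, Finset.sum_add_distrib]

lemma twinLabel_indicator {a b : V} (h : G.Adj a b) (x : ZMod k) (y : V) :
    twinLabel G (fun e => if e = s(a, b) then x else 0) y =
      (if y = a then x else 0) + (if y = b then x else 0) := by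
  classical
  rw [twinLabel]
  simp only [Finset.sum_ite_eq', SimpleGraph.mem_incidenceFinset]
  by_cases hy : s(a,b) ∈ G.incidenceSet y
  · rw [if_pos hy]
    have hy2 := hy.2
    rw [Sym2.mem_iff] at hy2
    rcases hy2 with rfl | rfl
    · rw [if_pos rfl, if_neg h.ne, add_zero]
    · rw [if_neg h.ne', if_pos rfl, zero_add]
  · rw [if_neg hy]
    have : ¬ (y = a ∨ y = b) := by
      intro hor
      exact hy ⟨G.mem_edgeSet.mpr h, by rcases hor with rfl | rfl <;> simp [Sym2.mem_iff]⟩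
    push_neg at this
    rw [if_neg this.1, if_neg this.2, add_zero]

lemma walk_alt (x : ZMod k) : ∀ {a b : V} (p : G.Walk a b),
    ∃ t : Sym2 V → ZMod k, ∀ y : V, twinLabel G t y =
      (if y = a then x else 0) - (if y = b then (-1 : ZMod k) ^ p.length * x else 0) := by
  intro a b p
  induction p generalizing x with
  | nil =>
    refine ⟨0, fun y => ?_⟩
    simp [twinLabel]
  | @cons a a' b h q ih =>
    obtain ⟨t', ht'⟩ := ih (-x)
    refine ⟨(fun e => if e = s(a, a') then x else 0) + t', fun y => ?_⟩
    rw [twinLabel_add, twinLabel_indicator G h, ht']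
    simp only [SimpleGraph.Walk.length_cons, pow_succ]
    by_cases hya : y = a <;> by_cases hya' : y = a' <;> by_cases hyb : y = b <;>
      simp_all [h.ne, sub_eq_iff_eq_add] <;> ring

lemma exists_odd_closed_walk (hG : G.Connected) (hnb : ¬ G.Colorable 2) (v : V) :
    ∃ p : G.Walk v v, Odd p.length := by
  by_contra hcon
  push_neg at hcon
  apply hnb
  have hreach : ∀ u, G.Reachable v u := fun u => hG.preconnected v u
  let w : ∀ u, G.Walk v u := fun u => (hreach u).some
  have hC : ∀ ⦃u u' : V⦄, G.Adj u u' →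
      ((w u).length : ZMod 2) ≠ ((w u').length : ZMod 2) := by
    intro u u' hadj heq
    have hq := hcon ((w u).append (SimpleGraph.Walk.cons hadj (w u').reverse))
    rw [← ZMod.natCast_eq_one_iff_odd] at hq
    apply hq
    push_cast [SimpleGraph.Walk.length_append, SimpleGraph.Walk.length_cons,
      SimpleGraph.Walk.length_reverse]
    rw [← heq]
    ring_nf
    rw [show ((w u).length : ZMod 2) * 2 = 0 by rw [show (2 : ZMod 2) = 0 by decide]; ring]
    ring
  have : G.Colorable (Fintype.card (ZMod 2)) :=
    (SimpleGraph.Coloring.mk (fun u => ((w u).length : ZMod 2)) (fun {u u'} h => hC h)).colorable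
  simpa using this

end Aux

theorem stmt_4 {V : Type*} [Fintype V] [DecidableEq V] (G : SimpleGraph V) (hG : G.Connected)
    (hnb : ¬ G.Colorable 2) (k : ℕ) (hk : 2 ≤ k)
    (c : V → ZMod k) (hc : ∀ ⦃u w : V⦄, G.Adj u w → c u ≠ c w)
    (s : Sym2 V → ZMod k) (v : V)
    (hs : ∀ u : V, u ≠ v → twinLabel G s u = c u)
    (x : ZMod k)
    (hx : ∀ u : V, G.Adj v u → c u ≠ twinLabel G s v + 2 * x) :
    ∃ s' : Sym2 V → ZMod k, IsImproperTwin G k s' ∧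
      ∀ u : V, twinLabel G s' u =
        Function.update c v (twinLabel G s v + 2 * x) u := by
  obtain ⟨p, hp⟩ := exists_odd_closed_walk G hG hnb v
  obtain ⟨t, ht⟩ := walk_alt G x p
  have ht' : ∀ y, twinLabel G t y = if y = v then 2 * x else 0 := by
    intro y
    rw [ht y, hp.neg_one_pow]
    by_cases hy : y = v <;> simp [hy] <;> ring
  have key : ∀ u, twinLabel G (s + t) u =
      Function.update c v (twinLabel G s v + 2 * x) u := by
    intro u
    rw [twinLabel_add, ht' u]
    by_cases hu : u = v
    · subst hu
      rw [if_pos rfl, Function.update_self]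
    · rw [if_neg hu, Function.update_of_ne hu, hs u hu, add_zero]
  refine ⟨s + t, ?_, key⟩
  intro u w' hadj
  rw [key, key]
  by_cases hu : u = v
  · have hw' : w' ≠ v := fun h => hadj.ne (hu.trans h.symm)
    rw [hu, Function.update_self, Function.update_of_ne hw']
    exact fun h => hx w' (hu ▸ hadj) h.symm
  · by_cases hw' : w' = v
    · rw [hw', Function.update_self, Function.update_of_ne hu]
      exact hx u (hw' ▸ hadj.symm)
    · rw [Function.update_of_ne hu, Function.update_of_ne hw']
      exact hc hadj
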